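/- Let N ≅ ℤⁿ be a lattice and let ρ₀, ρ₁, …, ρₙ ∈ N span N_ℝ as a cone (i.e. every element of N_ℝ is a nonnegative real combination of them). Then there exist positive integers λ₀, λ₁, …, λₙ with gcd(λ₀,…,λₙ) = 1, unique up to reordering matching the ρᵢ, such that λ₀ρ₀ + λ₁ρ₁ + … + λₙρₙ = 0. -/
import Mathlib

open Module

private def combo (k : Type) [Field k] (n m : ℕ) (ρ : Fin m → Fin n → k) :
    (Fin m → k) →ₗ[k] (Fin n → k) where
  toFun a := ∑ i, a i • ρ i
  map_add' x y := by simp [add_smul, Finset.sum_add_distrib]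
  map_smul' c x := by simp [smul_smul, Finset.smul_sum]

private lemma combo_dep (n : ℕ) (ρ : Fin (n + 1) → Fin n → ℝ)
    (hsurj : Function.Surjective (combo ℝ n (n + 1) ρ))
    (v w : Fin (n + 1) → ℝ) (hv : ∑ i, v i • ρ i = 0) (hw : ∑ i, w i • ρ i = 0)
    (hv0 : v ≠ 0) : ∃ c : ℝ, w = c • v := by
  set f := combo ℝ n (n + 1) ρ with hf
  have hker : finrank ℝ (LinearMap.ker f) = 1 := by
    have h1 := LinearMap.finrank_range_add_finrank_ker f
    rw [LinearMap.range_eq_top.mpr hsurj, finrank_top] at h1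
    simp [Module.finrank_fin_fun] at h1
    omega
  have hv' : v ∈ LinearMap.ker f := by rw [LinearMap.mem_ker]; exact hv
  have hw' : w ∈ LinearMap.ker f := by rw [LinearMap.mem_ker]; exact hw
  obtain ⟨c, hc⟩ := (finrank_eq_one_iff_of_nonzero' (⟨v, hv'⟩ : LinearMap.ker f)
    (by simpa using hv0)).mp hker ⟨w, hw'⟩
  exact ⟨c, by simpa using (congrArg Subtype.val hc).symm⟩

private lemma combo_ker_nontrivial (n : ℕ) (ρ : Fin (n + 1) → Fin n → ℚ) :
    ∃ q : Fin (n + 1) → ℚ, q ≠ 0 ∧ ∑ i, q i • ρ i = 0 := by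
  have hni : ¬ Function.Injective (combo ℚ n (n + 1) ρ) := by
    intro h
    have := LinearMap.finrank_le_finrank_of_injective h
    simp [Module.finrank_fin_fun] at this
  rw [Function.not_injective_iff] at hni
  obtain ⟨a, b, hab, hne⟩ := hni
  refine ⟨a - b, sub_ne_zero.mpr hne, ?_⟩
  have h2 : combo ℚ n (n + 1) ρ (a - b) = 0 := by rw [map_sub, hab, sub_self]
  exact h2

theorem weights_exist_unique (n : ℕ) (ρ : Fin (n + 1) → Fin n → ℤ)
    (hprim : ∀ i, Finset.univ.gcd (ρ i) = 1)
    (hspan : ∀ x : Fin n → ℝ, ∃ a : Fin (n + 1) → ℝ, (∀ i, 0 ≤ a i) ∧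
      x = ∑ i, a i • (fun j => ((ρ i j : ℤ) : ℝ))) :
    ∃! lam : Fin (n + 1) → ℤ, (∀ i, 0 < lam i) ∧ Finset.univ.gcd lam = 1 ∧
      ∑ i, lam i • ρ i = 0 := by
  classical
  set ρℝ : Fin (n + 1) → Fin n → ℝ := fun i j => ((ρ i j : ℤ) : ℝ) with hρℝ
  -- surjectivity of the real linear map
  have hsurj : Function.Surjective (combo ℝ n (n + 1) ρℝ) := by
    intro x
    obtain ⟨a, -, hx⟩ := hspan x
    exact ⟨a, hx.symm⟩
  -- componentwise description of the integer kernel condition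
  have hcomp : ∀ lam : Fin (n + 1) → ℤ,
      (∑ i, lam i • ρ i = 0) ↔ ∀ j, ∑ i, lam i * ρ i j = 0 := by
    intro lam
    constructor
    · intro h j
      simpa using congrFun h j
    · intro h
      funext j
      simpa using h j
  -- casting integer kernel vectors to real kernel vectors
  have hker : ∀ lam : Fin (n + 1) → ℤ, (∑ i, lam i • ρ i = 0) →
      ∑ i, (fun k => (lam k : ℝ)) i • ρℝ i = 0 := by
    intro lam h
    funext j
    simp only [Finset.sum_apply, Pi.smul_apply, smul_eq_mul, Pi.zero_apply, hρℝ]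
    exact_mod_cast (hcomp lam).mp h j
  -- uniqueness part
  have uniq : ∀ y z : Fin (n + 1) → ℤ,
      ((∀ i, 0 < y i) ∧ Finset.univ.gcd y = 1 ∧ ∑ i, y i • ρ i = 0) →
      ((∀ i, 0 < z i) ∧ Finset.univ.gcd z = 1 ∧ ∑ i, z i • ρ i = 0) → y = z := by
    rintro y z ⟨hy1, hy2, hy3⟩ ⟨hz1, hz2, hz3⟩
    have hyR := hker y hy3
    have hzR := hker z hz3
    have hyne : (fun k => (y k : ℝ)) ≠ 0 := by
      intro h
      have h0 : (y 0 : ℝ) = 0 := congrFun h 0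
      exact (hy1 0).ne' (by exact_mod_cast h0)
    obtain ⟨c, hc⟩ := combo_dep n ρℝ hsurj _ _ hyR hzR hyne
    have key : ∀ j, y 0 * z j = z 0 * y j := by
      intro j
      have h1 : (z j : ℝ) = c * (y j : ℝ) := by simpa using congrFun hc j
      have h2 : (z 0 : ℝ) = c * (y 0 : ℝ) := by simpa using congrFun hc 0
      have h3 : ((y 0 * z j : ℤ) : ℝ) = ((z 0 * y j : ℤ) : ℝ) := by
        push_cast
        rw [h1, h2]
        ring
      exact_mod_cast h3
    have hgy : Finset.univ.gcd (fun j => y 0 * z j) = y 0 := by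
      rw [Finset.gcd_mul_left, hz2, mul_one, Int.normalize_of_nonneg (hy1 0).le]
    have hgz : Finset.univ.gcd (fun j => z 0 * y j) = z 0 := by
      rw [Finset.gcd_mul_left, hy2, mul_one, Int.normalize_of_nonneg (hz1 0).le]
    have h00 : y 0 = z 0 := by
      rw [← hgy, ← hgz]
      congr 1
      funext j
      exact key j
    funext j
    have hj := key j
    rw [h00] at hj
    exact (mul_left_cancel₀ (hz1 0).ne' hj).symm
  -- a strictly positive real kernel vector
  obtain ⟨a, ha0, hax⟩ := hspan (-∑ i, ρℝ i)
  have hax' : (-∑ i, ρℝ i) = ∑ i, a i • ρℝ i := hax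
  have hbker : ∑ i, (fun i => a i + 1) i • ρℝ i = 0 := by
    calc ∑ i, (a i + 1) • ρℝ i = ∑ i, (a i • ρℝ i + ρℝ i) :=
          Finset.sum_congr rfl fun i _ => by rw [add_smul, one_smul]
      _ = (∑ i, a i • ρℝ i) + ∑ i, ρℝ i := Finset.sum_add_distrib
      _ = 0 := by rw [← hax']; simp
  have hbpos : ∀ i, (0 : ℝ) < a i + 1 := fun i => by have := ha0 i; linarith
  have hbne : (fun i => a i + 1) ≠ (0 : Fin (n + 1) → ℝ) := by
    intro h
    have h0 : a 0 + 1 = 0 := congrFun h 0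
    have := ha0 0
    linarith
  -- a nonzero rational kernel vector
  obtain ⟨q, hq0, hqker⟩ := combo_ker_nontrivial n fun i j => ((ρ i j : ℤ) : ℚ)
  set N : ℤ := ∏ i, ((q i).den : ℤ) with hN
  have hNpos : 0 < N := Finset.prod_pos fun i _ => by exact_mod_cast (q i).pos
  -- clear denominators: a nonzero integer kernel vector
  have hqN : ∀ i, ∃ w : ℤ, (w : ℚ) = q i * N := by
    intro i
    have hd : ((q i).den : ℤ) ∣ N := Finset.dvd_prod_of_mem _ (Finset.mem_univ i)
    obtain ⟨k, hk⟩ := hd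
    refine ⟨(q i).num * k, ?_⟩
    rw [hk]
    push_cast
    rw [← mul_assoc, Rat.mul_den_eq_num]
  choose w hw using hqN
  have hwker : ∑ i, w i • ρ i = 0 := by
    rw [hcomp]
    intro j
    have h1 : ∑ i, q i * ((ρ i j : ℤ) : ℚ) = 0 := by simpa using congrFun hqker j
    have h2 : ∑ i, (w i : ℚ) * ((ρ i j : ℤ) : ℚ) = 0 := by
      have heq : ∑ i, (w i : ℚ) * ((ρ i j : ℤ) : ℚ)
          = (N : ℚ) * ∑ i, q i * ((ρ i j : ℤ) : ℚ) := by
        rw [Finset.mul_sum]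
        exact Finset.sum_congr rfl fun i _ => by rw [hw i]; ring
      rw [heq, h1, mul_zero]
    exact_mod_cast h2
  have hwne : w ≠ 0 := by
    intro h
    apply hq0
    funext i
    have h0 : q i * (N : ℚ) = 0 := by rw [← hw i, h]; simp
    rcases mul_eq_zero.mp h0 with h' | h'
    · simpa using h'
    · exact absurd h' (by exact_mod_cast hNpos.ne')
  -- cast to the reals and compare with the positive vector
  have hwR := hker w hwker
  have hwRne : (fun k => (w k : ℝ)) ≠ 0 := by
    intro h
    apply hwne
    funext i
    have h0 : (w i : ℝ) = 0 := congrFun h i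
    exact_mod_cast h0
  obtain ⟨c, hc⟩ := combo_dep n ρℝ hsurj _ _ hbker hwR hbne
  have hc0 : c ≠ 0 := by
    rintro rfl
    rw [zero_smul] at hc
    exact hwRne hc
  have hcb : ∀ i, (w i : ℝ) = c * (a i + 1) := fun i => by simpa using congrFun hc i
  obtain ⟨u, hupos, huker⟩ :
      ∃ u : Fin (n + 1) → ℤ, (∀ i, 0 < u i) ∧ ∑ i, u i • ρ i = 0 := by
    rcases hc0.lt_or_gt with hneg | hpos
    · refine ⟨-w, fun i => ?_, ?_⟩
      · have hlt : (w i : ℝ) < 0 := by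
          rw [hcb i]
          exact mul_neg_of_neg_of_pos hneg (hbpos i)
        have : w i < 0 := by exact_mod_cast hlt
        simpa using this
      · have hsum : ∑ i, (-w) i • ρ i = -∑ i, w i • ρ i := by
          simp [neg_smul, ← Finset.sum_neg_distrib]
        rw [hsum, hwker, neg_zero]
    · refine ⟨w, fun i => ?_, hwker⟩
      have hlt : (0 : ℝ) < (w i : ℝ) := by
        rw [hcb i]
        exact mul_pos hpos (hbpos i)
      exact_mod_cast hlt
  -- normalize by the gcd
  set g : ℤ := Finset.univ.gcd u with hg
  have hgdvd : ∀ i, g ∣ u i := fun i => Finset.gcd_dvd (Finset.mem_univ i)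
  have hgne : g ≠ 0 := by
    intro h
    have := Finset.gcd_eq_zero_iff.mp h 0 (Finset.mem_univ 0)
    exact (hupos 0).ne' this
  have hgpos : 0 < g :=
    lt_of_le_of_ne (Int.nonneg_of_normalize_eq_self Finset.normalize_gcd) (Ne.symm hgne)
  set lam : Fin (n + 1) → ℤ := fun i => u i / g with hlam
  have hmul : ∀ i, g * lam i = u i := fun i => Int.mul_ediv_cancel' (hgdvd i)
  have hlampos : ∀ i, 0 < lam i := by
    intro i
    rcases lt_trichotomy (lam i) 0 with h | h | h
    · nlinarith [hmul i, hupos i, hgpos]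
    · have h' := hmul i
      rw [h, mul_zero] at h'
      exact absurd h'.symm (hupos i).ne'
    · exact h
  have hlamgcd : Finset.univ.gcd lam = 1 := by
    rw [hlam, hg]
    exact Finset.gcd_div_eq_one (f := u) (Finset.mem_univ 0) (hupos 0).ne'
  have hlamker : ∑ i, lam i • ρ i = 0 := by
    rw [hcomp]
    intro j
    have h1 := (hcomp u).mp huker j
    have h2 : ∑ i, u i * ρ i j = g * ∑ i, lam i * ρ i j := by
      rw [Finset.mul_sum]
      exact Finset.sum_congr rfl fun i _ => by rw [← hmul i]; ring
    rw [h2] at h1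
    exact (mul_eq_zero.mp h1).resolve_left hgne
  exact ⟨lam, ⟨hlampos, hlamgcd, hlamker⟩,
    fun y hy => uniq y lam hy ⟨hlampos, hlamgcd, hlamker⟩⟩
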